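/- (Correctness of genLengthK) For every natural number k and every list xs of natural numbers, xs ∈ ⟦genLengthK k⟧ ↔ xs.length = k. -/
import Mathlib


namespace PBT

inductive Gen : Type → Type 1 where
  | pure {α : Type} : α → Gen α
  | pick {α : Type} : Gen α → Gen α → Gen α
  | bind {α β : Type} : Gen α → (α → Gen β) → Gen β
  | indexed {α : Type} : (ℕ → Gen (Option α)) → Gen α
  | assume {α : Type} : (b : Bool) → (b = true → Gen α) → Gen α

instance : Pure Gen := ⟨Gen.pure⟩
instance : Bind Gen := ⟨Gen.bind⟩

def Gen.support : {α : Type} → Gen α → Set α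
  | _, .pure a' => {a | a = a'}
  | _, .pick x y => {a | a ∈ x.support ∨ a ∈ y.support}
  | _, .bind x f => {a | ∃ a', a' ∈ x.support ∧ a ∈ (f a').support}
  | _, .indexed f => {a | (∃ n, some a ∈ (f n).support) ∧
      (∀ a' n, some a' ∈ (f n).support → some a' ∈ (f (n + 1)).support)}
  | _, .assume b k => {a | ∃ h : b = true, a ∈ (k h).support}

notation (priority := high) "⟦" g "⟧" => Gen.support g

def arbNat.go : ℕ → Gen (Option ℕ)
  | 0 => .pure none
  | fuel + 1 =>
    .pick (.pure (some 0))
      (arbNat.go fuel >>= fun on' =>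
        match on' with
        | none => .pure none
        | some n' => .pure (some (1 + n')))

def arbNat : Gen ℕ := .indexed arbNat.go

def listUnfold.go {α β : Type} (g : β → Gen (Option (α × β))) : β → ℕ → Gen (Option (List α))
  | _, 0 => .pure none
  | b, fuel + 1 =>
    g b >>= fun step =>
      match step with
      | none => .pure (some [])
      | some (x, b') =>
        listUnfold.go g b' fuel >>= fun mxs =>
          match mxs with
          | none => .pure none
          | some xs => .pure (some (x :: xs))

def listUnfold {α β : Type} (g : β → Gen (Option (α × β))) (b : β) : Gen (List α) :=
  .indexed (listUnfold.go g b)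

def genLengthK (k : ℕ) : Gen (List ℕ) :=
  listUnfold
    (fun n =>
      match n with
      | 0 => .pure none
      | k' + 1 => arbNat >>= fun x => .pure (some (x, k')))
    k

lemma mem_pure {α : Type} {a b : α} : a ∈ ⟦(Gen.pure b : Gen α)⟧ ↔ a = b := Iff.rfl

lemma mem_bind {α β : Type} {x : Gen α} {f : α → Gen β} {b : β} :
    b ∈ ⟦x >>= f⟧ ↔ ∃ a, a ∈ ⟦x⟧ ∧ b ∈ ⟦f a⟧ := Iff.rfl

lemma mem_pick {α : Type} {x y : Gen α} {a : α} :
    a ∈ ⟦Gen.pick x y⟧ ↔ a ∈ ⟦x⟧ ∨ a ∈ ⟦y⟧ := Iff.rfl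

lemma arbNat_go_mem (fuel m : ℕ) : some m ∈ ⟦arbNat.go fuel⟧ ↔ m < fuel := by
  induction fuel generalizing m with
  | zero => simp [arbNat.go, mem_pure]
  | succ f ih =>
    rw [arbNat.go, mem_pick, mem_pure, mem_bind]
    constructor
    · rintro (h | ⟨on', h1, h2⟩)
      · simp at h; omega
      · match on' with
        | none => simp [mem_pure] at h2
        | some n' =>
          rw [ih] at h1
          simp [mem_pure] at h2
          omega
    · intro h
      match m with
      | 0 => exact Or.inl rfl
      | m + 1 =>
        refine Or.inr ⟨some m, (ih m).2 (by omega), ?_⟩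
        simp [mem_pure]; omega

lemma arbNat_mem (m : ℕ) : m ∈ ⟦arbNat⟧ := by
  refine ⟨⟨m + 1, (arbNat_go_mem _ _).2 (by omega)⟩, fun a' n h => ?_⟩
  rw [arbNat_go_mem] at *; omega

def gK : ℕ → Gen (Option (ℕ × ℕ)) := fun n =>
  match n with
  | 0 => Gen.pure none
  | k' + 1 => arbNat >>= fun x => Gen.pure (some (x, k'))

lemma gLK_go_mem (fuel n : ℕ) (xs : List ℕ) :
    some xs ∈ ⟦listUnfold.go gK n fuel⟧ ↔ xs.length = n ∧ n < fuel := by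
  induction fuel generalizing n xs with
  | zero => simp [listUnfold.go, mem_pure]
  | succ f ih =>
    rw [listUnfold.go, mem_bind]
    constructor
    · rintro ⟨step, h1, h2⟩
      match n, step with
      | 0, step =>
        simp [gK, mem_pure] at h1
        subst h1
        simp [mem_pure] at h2
        subst h2
        simp
      | k' + 1, none =>
        simp [gK, mem_bind, mem_pure] at h1
      | k' + 1, some (x, b') =>
        simp only [gK, mem_bind, mem_pure] at h1
        obtain ⟨a, -, ha⟩ := h1
        obtain ⟨rfl, rfl⟩ := Prod.mk.injEq .. ▸ Option.some.injEq .. ▸ ha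
        rw [mem_bind] at h2
        obtain ⟨mxs, hm1, hm2⟩ := h2
        match mxs with
        | none => simp [mem_pure] at hm2
        | some ys =>
          simp [mem_pure] at hm2
          subst hm2
          rw [ih] at hm1
          simp; omega
    · rintro ⟨hl, hf⟩
      match n, xs with
      | 0, xs =>
        simp at hl; subst hl
        exact ⟨none, rfl, rfl⟩
      | k' + 1, [] => simp at hl
      | k' + 1, x :: ys =>
        refine ⟨some (x, k'), ?_, ?_⟩
        · exact ⟨x, arbNat_mem x, rfl⟩
        · refine ⟨some ys, (ih _ _).2 ⟨by simpa using hl, by omega⟩, rfl⟩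

theorem genLengthK_correct (k : ℕ) (xs : List ℕ) :
    xs ∈ ⟦genLengthK k⟧ ↔ xs.length = k := by
  show xs ∈ ⟦listUnfold gK k⟧ ↔ _
  constructor
  · rintro ⟨⟨fuel, h⟩, -⟩
    exact ((gLK_go_mem _ _ _).1 h).1
  · intro h
    refine ⟨⟨k + 1, (gLK_go_mem _ _ _).2 ⟨h, by omega⟩⟩, fun a' n ha => ?_⟩
    rw [gLK_go_mem] at *; omega

end PBT
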